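/- arXiv:1006.2746 — 2 statements merged into one kernel-verified Lean document; each statement's English description precedes it below -/
import Mathlib

section
/- Let H be a complex Hilbert space and γ ∈ ℂ with Re γ ≤ 0. For each n ∈ ℕ let P^{(n)}_1, …, P^{(n)}_{2^n} be pairwise commuting orthogonal projections on H such that for every x ∈ H the vectors 2^{−n} Σ_{i=1}^{2^n} (x − P^{(n)}_i x) converge to 0 in norm as n → ∞. For S ⊆ {1,…,2^n} put E^{(n)}_S := ∏_{i∈S} (1 − P^{(n)}_i) · ∏_{i∉S} P^{(n)}_i. Then for every ψ ∈ H, ‖ Σ_{S ⊆ {1,…,2^n}} e^{γ·#S/2^n} E^{(n)}_S ψ ‖ → ‖ψ‖ as n → ∞. -/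
open Filter Topology
open scoped InnerProductSpace

/-- For pairwise commuting idempotents/projections `p i`, the product
`∏_{i ∈ S} (1 - p i) * ∏_{i ∉ S} p i` (taken in increasing order of indices; by
commutativity the order is irrelevant). -/
noncomputable def prodInOut {N : ℕ} {A : Type*} [Ring A] (p : Fin N → A) (S : Finset (Fin N)) :
    A :=
  ((S.sort (· ≤ ·)).map (fun i => 1 - p i)).prod * ((Sᶜ.sort (· ≤ ·)).map p).prod

namespace ProjAux
open Finset

lemma sortProd {N : ℕ} {B : Type*} [CommRing B] (f : Fin N → B) (S : Finset (Fin N)) :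
    ((S.sort (· ≤ ·)).map f).prod = S.prod f := by
  rw [Finset.prod_eq_multiset_prod, ← Finset.sort_eq S (· ≤ ·), Multiset.map_coe,
    Multiset.prod_coe]

lemma prodInOut_eq_map {N : ℕ} {A B : Type*} [Ring A] [CommRing B] (φ : B →+* A)
    (p : Fin N → A) (q : Fin N → B) (hφ : ∀ i, φ (q i) = p i) (S : Finset (Fin N)) :
    prodInOut p S = φ ((∏ i ∈ S, (1 - q i)) * ∏ i ∈ Sᶜ, q i) := by
  rw [map_mul, ← sortProd, ← sortProd, map_list_prod, map_list_prod, prodInOut,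
    List.map_map, List.map_map]
  congr 1
  · congr 1; apply List.map_congr_left; intro i _; simp [hφ]
  · congr 1; apply List.map_congr_left; intro i _; simp [hφ]

lemma L1 {N : ℕ} {B : Type*} [CommRing B] (q : Fin N → B) :
    ∑ S : Finset (Fin N), (∏ i ∈ S, (1 - q i)) * ∏ i ∈ Sᶜ, q i = 1 := by
  have h := Finset.prod_add (fun i => 1 - q i) q (Finset.univ : Finset (Fin N))
  simp only [sub_add_cancel, Finset.prod_const_one, Finset.powerset_univ] at h
  calc ∑ S : Finset (Fin N), (∏ i ∈ S, (1 - q i)) * ∏ i ∈ Sᶜ, q i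
      = ∑ S : Finset (Fin N), (∏ i ∈ S, (1 - q i)) * ∏ i ∈ univ \ S, q i :=
        Finset.sum_congr rfl (fun S _ => by rw [Finset.compl_eq_univ_sdiff])
    _ = 1 := h.symm

lemma Lkill {N : ℕ} {B : Type*} [CommRing B] (q : Fin N → B)
    (hq : ∀ i, IsIdempotentElem (q i)) {S T : Finset (Fin N)} {i : Fin N}
    (hiS : i ∈ S) (hiT : i ∉ T) :
    ((∏ j ∈ S, (1 - q j)) * ∏ j ∈ Sᶜ, q j) * ((∏ j ∈ T, (1 - q j)) * ∏ j ∈ Tᶜ, q j) = 0 := by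
  have hiTc : i ∈ Tᶜ := Finset.mem_compl.2 hiT
  rw [← Finset.mul_prod_erase _ _ hiS, ← Finset.mul_prod_erase _ _ hiTc]
  have h0 : (1 - q i) * q i = 0 := by rw [sub_mul, one_mul, (hq i).eq, sub_self]
  calc _ = ((1 - q i) * q i) * ((∏ j ∈ S.erase i, (1 - q j)) * (∏ j ∈ Sᶜ, q j) *
          (∏ j ∈ T, (1 - q j)) * (∏ j ∈ Tᶜ.erase i, q j)) := by ring
    _ = 0 := by rw [h0, zero_mul]

lemma L2 {N : ℕ} {B : Type*} [CommRing B] (q : Fin N → B)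
    (hq : ∀ i, IsIdempotentElem (q i)) {S T : Finset (Fin N)} (hST : S ≠ T) :
    ((∏ i ∈ S, (1 - q i)) * ∏ i ∈ Sᶜ, q i) * ((∏ i ∈ T, (1 - q i)) * ∏ i ∈ Tᶜ, q i) = 0 := by
  by_cases h : ∃ i, i ∈ S ∧ i ∉ T
  · obtain ⟨i, h1, h2⟩ := h
    exact Lkill q hq h1 h2
  · push_neg at h
    have h' : ∃ i, i ∈ T ∧ i ∉ S := by
      by_contra h''
      push_neg at h''
      exact hST (Finset.Subset.antisymm h h'')
    obtain ⟨i, h1, h2⟩ := h'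
    rw [mul_comm]
    exact Lkill q hq h1 h2

lemma L3 {N : ℕ} {B : Type*} [CommRing B] (q : Fin N → B)
    (hq : ∀ i, IsIdempotentElem (q i)) (S : Finset (Fin N)) (i : Fin N) :
    (1 - q i) * ((∏ j ∈ S, (1 - q j)) * ∏ j ∈ Sᶜ, q j) =
      if i ∈ S then (∏ j ∈ S, (1 - q j)) * ∏ j ∈ Sᶜ, q j else 0 := by
  by_cases hi : i ∈ S
  · rw [if_pos hi, ← Finset.mul_prod_erase _ _ hi]
    have h1 : (1 - q i) * (1 - q i) = 1 - q i := ((hq i).one_sub).eq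
    calc _ = ((1 - q i) * (1 - q i)) * ((∏ j ∈ S.erase i, (1 - q j)) * ∏ j ∈ Sᶜ, q j) := by ring
      _ = _ := by rw [h1]; ring
  · rw [if_neg hi]
    have hic : i ∈ Sᶜ := Finset.mem_compl.2 hi
    rw [← Finset.mul_prod_erase _ _ hic]
    have h0 : (1 - q i) * q i = 0 := by rw [sub_mul, one_mul, (hq i).eq, sub_self]
    calc _ = ((1 - q i) * q i) * ((∏ j ∈ S, (1 - q j)) * ∏ j ∈ Sᶜ.erase i, q j) := by ring
      _ = 0 := by rw [h0, zero_mul]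

section ringlevel
variable {N : ℕ} {A : Type*} [Ring A] {p : Fin N → A}
  (hc : ∀ i j, Commute (p i) (p j))
include hc

lemma A1 : ∑ S : Finset (Fin N), prodInOut p S = 1 := by
  set s : Set A := Set.range p with hs
  letI : CommRing (Subring.closure s) := Subring.closureCommRingOfComm (by
    rintro _ ⟨i, rfl⟩ _ ⟨j, rfl⟩; exact hc i j)
  set q : Fin N → Subring.closure s := fun i => ⟨p i, Subring.subset_closure ⟨i, rfl⟩⟩ with hq
  have h := fun S => prodInOut_eq_map (Subring.closure s).subtype p q (fun i => rfl) S
  calc ∑ S : Finset (Fin N), prodInOut p S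
      = (Subring.closure s).subtype (∑ S : Finset (Fin N),
          (∏ i ∈ S, (1 - q i)) * ∏ i ∈ Sᶜ, q i) := by
        rw [map_sum]; exact Finset.sum_congr rfl (fun S _ => h S)
    _ = 1 := by rw [L1 q]; exact map_one _

variable (hidem : ∀ i, IsIdempotentElem (p i))
include hidem

lemma A2 {S T : Finset (Fin N)} (hST : S ≠ T) :
    prodInOut p S * prodInOut p T = 0 := by
  set s : Set A := Set.range p with hs
  letI : CommRing (Subring.closure s) := Subring.closureCommRingOfComm (by
    rintro _ ⟨i, rfl⟩ _ ⟨j, rfl⟩; exact hc i j)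
  set q : Fin N → Subring.closure s := fun i => ⟨p i, Subring.subset_closure ⟨i, rfl⟩⟩ with hq
  have hqi : ∀ i, IsIdempotentElem (q i) := fun i => Subtype.ext (hidem i)
  have h := fun S => prodInOut_eq_map (Subring.closure s).subtype p q (fun i => rfl) S
  rw [h S, h T, ← map_mul, L2 q hqi hST, map_zero]

lemma A3 (S : Finset (Fin N)) :
    ∑ i : Fin N, (1 - p i) * prodInOut p S = S.card • prodInOut p S := by
  set s : Set A := Set.range p with hs
  letI : CommRing (Subring.closure s) := Subring.closureCommRingOfComm (by
    rintro _ ⟨i, rfl⟩ _ ⟨j, rfl⟩; exact hc i j)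
  set q : Fin N → Subring.closure s := fun i => ⟨p i, Subring.subset_closure ⟨i, rfl⟩⟩ with hq
  have hqi : ∀ i, IsIdempotentElem (q i) := fun i => Subtype.ext (hidem i)
  have h := fun S => prodInOut_eq_map (Subring.closure s).subtype p q (fun i => rfl) S
  have h1 : ∀ i : Fin N, ((Subring.closure s).subtype) (1 - q i) = 1 - p i := fun i => by
    simp
    rfl
  calc ∑ i : Fin N, (1 - p i) * prodInOut p S
      = (Subring.closure s).subtype
          (∑ i : Fin N, (1 - q i) * ((∏ j ∈ S, (1 - q j)) * ∏ j ∈ Sᶜ, q j)) := by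
        rw [map_sum]
        exact Finset.sum_congr rfl (fun i _ => by rw [map_mul, h1, h S])
    _ = (Subring.closure s).subtype (S.card • ((∏ j ∈ S, (1 - q j)) * ∏ j ∈ Sᶜ, q j)) := by
        congr 1
        rw [Finset.sum_congr rfl (fun i _ => L3 q hqi S i)]
        rw [Finset.sum_ite_mem, Finset.univ_inter, Finset.sum_const]
    _ = _ := by rw [map_nsmul, h S]
end ringlevel

lemma star_list_prod {A : Type*} [Ring A] [StarRing A] (l : List A)
    (h1 : ∀ a ∈ l, star a = a) (h2 : ∀ a ∈ l, ∀ b ∈ l, Commute a b) :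
    star l.prod = l.prod := by
  induction l with
  | nil => simp
  | cons a l ih =>
      rw [List.prod_cons, star_mul, h1 a List.mem_cons_self,
        ih (fun b hb => h1 b (List.mem_cons_of_mem a hb))
          (fun b hb c hc => h2 b (List.mem_cons_of_mem a hb) c (List.mem_cons_of_mem a hc))]
      exact (Commute.list_prod_right _ _
        (fun b hb => h2 a List.mem_cons_self b (List.mem_cons_of_mem a hb))).eq.symm

lemma A4 {N : ℕ} {A : Type*} [Ring A] [StarRing A] {p : Fin N → A}
    (hc : ∀ i j, Commute (p i) (p j)) (hsa : ∀ i, star (p i) = p i) (S : Finset (Fin N)) :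
    star (prodInOut p S) = prodInOut p S := by
  have mem1 : ∀ a ∈ (S.sort (· ≤ ·)).map (fun i => 1 - p i), ∃ i, a = 1 - p i := by
    intro a ha
    obtain ⟨i, _, rfl⟩ := List.mem_map.1 ha
    exact ⟨i, rfl⟩
  have mem2 : ∀ a ∈ (Sᶜ.sort (· ≤ ·)).map p, ∃ i, a = p i := by
    intro a ha
    obtain ⟨i, _, rfl⟩ := List.mem_map.1 ha
    exact ⟨i, rfl⟩
  have hc1 : ∀ i j, Commute (1 - p i) (p j) :=
    fun i j => (Commute.one_left (p j)).sub_left (hc i j)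
  have hcomm' : ∀ i j, Commute (1 - p i) (1 - p j) :=
    fun i j => (Commute.one_right (1 - p i)).sub_right (hc1 i j)
  have hsa1 : ∀ i, star (1 - p i) = 1 - p i := fun i => by rw [star_sub, star_one, hsa]
  set L1 : List A := (S.sort (· ≤ ·)).map (fun i => 1 - p i) with hL1
  set L2 : List A := (Sᶜ.sort (· ≤ ·)).map p with hL2
  have s1 : star L1.prod = L1.prod := by
    apply star_list_prod
    · intro a ha; obtain ⟨i, rfl⟩ := mem1 a ha; exact hsa1 i
    · intro a ha b hb
      obtain ⟨i, rfl⟩ := mem1 a ha; obtain ⟨j, rfl⟩ := mem1 b hb; exact hcomm' i j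
  have s2 : star L2.prod = L2.prod := by
    apply star_list_prod
    · intro a ha; obtain ⟨i, rfl⟩ := mem2 a ha; exact hsa i
    · intro a ha b hb
      obtain ⟨i, rfl⟩ := mem2 a ha; obtain ⟨j, rfl⟩ := mem2 b hb; exact hc i j
  have hcLL : Commute L1.prod L2.prod := by
    apply Commute.list_prod_right
    intro b hb
    obtain ⟨j, rfl⟩ := mem2 b hb
    apply Commute.list_prod_left
    intro a ha
    obtain ⟨i, rfl⟩ := mem1 a ha
    exact hc1 i j
  show star (L1.prod * L2.prod) = L1.prod * L2.prod
  rw [star_mul, s1, s2, hcLL.eq]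

lemma orth_norm_sq {ι H : Type*} [Fintype ι] [DecidableEq ι] [NormedAddCommGroup H]
    [InnerProductSpace ℂ H] (w : ι → H) (h : ∀ S T, S ≠ T → ⟪w S, w T⟫_ℂ = 0) :
    ‖∑ S, w S‖ ^ 2 = ∑ S, ‖w S‖ ^ 2 := by
  have key : ⟪∑ S, w S, ∑ T, w T⟫_ℂ = ∑ S, (‖w S‖ : ℂ) ^ 2 := by
    rw [sum_inner]
    refine Finset.sum_congr rfl (fun S _ => ?_)
    rw [inner_sum, Finset.sum_eq_single S (fun T _ hT => h S T (Ne.symm hT))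
      (fun hS => absurd (Finset.mem_univ S) hS)]
    exact inner_self_eq_norm_sq_to_K _
  have h2 := inner_self_eq_norm_sq_to_K (𝕜 := ℂ) (∑ S, w S)
  rw [key] at h2
  exact Complex.ofReal_injective (by push_cast; exact h2.symm)

end ProjAux

open ProjAux

/-- Key estimate: for pairwise commuting orthogonal projections `P^{(n)}_i`, `i = 1, …, 2^n`,
whose averaged defects `2^{-n} ∑ i (x - P^{(n)}_i x)` tend to `0`, and `γ` with `Re γ ≤ 0`,
the norm of `∑_{S ⊆ {1,…,2^n}} e^{γ #S / 2^n} E^{(n)}_S ψ` tends to `‖ψ‖`. -/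
theorem norm_sum_exp_projection_products_tendsto
    {H : Type*} [NormedAddCommGroup H] [InnerProductSpace ℂ H] [CompleteSpace H]
    (γ : ℂ) (hγ : γ.re ≤ 0)
    (P : (n : ℕ) → Fin (2 ^ n) → H →L[ℂ] H)
    (hidem : ∀ n i, IsIdempotentElem (P n i))
    (hsa : ∀ n i, IsSelfAdjoint (P n i))
    (hcomm : ∀ n i j, Commute (P n i) (P n j))
    (havg : ∀ x : H,
      Tendsto (fun n => ((2 : ℝ) ^ n)⁻¹ • ∑ i : Fin (2 ^ n), (x - P n i x)) atTop (𝓝 0))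
    (ψ : H) :
    Tendsto
      (fun n => ‖∑ S : Finset (Fin (2 ^ n)),
        Complex.exp (γ * (S.card : ℂ) / (2 : ℂ) ^ n) • (prodInOut (P n) S) ψ‖)
      atTop (𝓝 ‖ψ‖) := by
  classical
  set g : ℕ → ℝ := fun n => ‖∑ S : Finset (Fin (2 ^ n)),
      Complex.exp (γ * (S.card : ℂ) / (2 : ℂ) ^ n) • (prodInOut (P n) S) ψ‖ with hgdef
  set d : ℕ → ℝ := fun n =>
      (⟪((2 : ℝ) ^ n)⁻¹ • ∑ i : Fin (2 ^ n), (ψ - P n i ψ), ψ⟫_ℂ).re with hddef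
  have hdlim : Tendsto d atTop (𝓝 0) := by
    have h2 : Tendsto (fun n => ⟪((2:ℝ)^n)⁻¹ • ∑ i : Fin (2^n), (ψ - P n i ψ), ψ⟫_ℂ)
        atTop (𝓝 (⟪(0:H), ψ⟫_ℂ)) := (havg ψ).inner tendsto_const_nhds
    rw [inner_zero_left] at h2
    exact (Complex.continuous_re.tendsto 0).comp h2
  have main : ∀ n : ℕ, g n ^ 2 ≤ ‖ψ‖^2 ∧ ‖ψ‖^2 + 2 * γ.re * d n ≤ g n ^ 2 ∧ 0 ≤ d n := by
    intro n
    set E : Finset (Fin (2^n)) → (H →L[ℂ] H) := fun S => prodInOut (P n) S with hE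
    set v : Finset (Fin (2^n)) → H := fun S => E S ψ with hv
    set c : Finset (Fin (2^n)) → ℂ :=
      fun S => Complex.exp (γ * (S.card : ℂ) / (2 : ℂ) ^ n) with hc
    set t : Finset (Fin (2^n)) → ℝ := fun S => (S.card : ℝ) / 2 ^ n with ht
    have ht0 : ∀ S, 0 ≤ t S := fun S => by positivity
    have hsa' : ∀ S, star (E S) = E S := fun S =>
      A4 (hcomm n) (fun i => (hsa n i).star_eq) S
    have horth : ∀ S T, S ≠ T → ⟪v S, v T⟫_ℂ = 0 := by
      intro S T hST
      have hadj : ⟪E S ψ, E T ψ⟫_ℂ = ⟪ψ, E S (E T ψ)⟫_ℂ := by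
        conv_lhs => rw [show E S = ContinuousLinearMap.adjoint (E S) from by
          rw [← ContinuousLinearMap.star_eq_adjoint, hsa' S]]
        exact ContinuousLinearMap.adjoint_inner_left (E S) (E T ψ) ψ
      have hmul : E S (E T ψ) = (E S * E T) ψ := rfl
      rw [show v S = E S ψ from rfl, show v T = E T ψ from rfl, hadj, hmul,
        A2 (hcomm n) (hidem n) hST]
      simp
    have hsum : ∑ S, v S = ψ := by
      have h1 := A1 (hcomm n)
      calc ∑ S, v S = (∑ S, E S) ψ := by rw [ContinuousLinearMap.sum_apply]
        _ = ψ := by rw [h1]; rfl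
    have hnormpsi : ∑ S, ‖v S‖^2 = ‖ψ‖^2 := by
      conv_rhs => rw [← hsum]
      exact (orth_norm_sq v horth).symm
    -- the squared norm of the weighted sum
    have hre : ∀ S, (γ * (S.card : ℂ) / (2 : ℂ) ^ n).re = γ.re * t S := by
      intro S
      have : γ * (S.card : ℂ) / (2 : ℂ) ^ n = γ * ((t S : ℝ) : ℂ) := by
        rw [ht]; push_cast; ring
      rw [this]
      simp [Complex.mul_re]
    have hnormc : ∀ S, ‖c S‖^2 = Real.exp (2 * γ.re * t S) := by
      intro S
      rw [hc]
      simp only [Complex.norm_exp, hre]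
      rw [← Real.exp_nat_mul]
      norm_num
      ring_nf
    have hgsq : g n ^ 2 = ∑ S, Real.exp (2 * γ.re * t S) * ‖v S‖^2 := by
      have horth' : ∀ S T, S ≠ T → ⟪c S • v S, c T • v T⟫_ℂ = 0 := fun S T h => by
        rw [inner_smul_left, inner_smul_right, horth S T h, mul_zero, mul_zero]
      have h1 := orth_norm_sq (fun S => c S • v S) horth'
      rw [hgdef]
      simp only
      rw [h1]
      refine Finset.sum_congr rfl (fun S _ => ?_)
      rw [norm_smul, mul_pow, hnormc]
    -- the defect identity
    have hdn : d n = ∑ S, t S * ‖v S‖^2 := by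
      have happ : ∀ S : Finset (Fin (2^n)),
          (∑ i : Fin (2^n), (1 - P n i)) (v S) = ((S.card : ℝ)) • v S := by
        intro S
        have h3 := A3 (hcomm n) (hidem n) S
        have : (∑ i : Fin (2^n), (1 - P n i)) * E S = S.card • E S := by
          rw [Finset.sum_mul]; exact h3
        have h4 : ((∑ i : Fin (2^n), (1 - P n i)) * E S) ψ = (S.card • E S) ψ := by rw [this]
        rw [show (∑ i : Fin (2^n), (1 - P n i)) (v S)
            = ((∑ i : Fin (2^n), (1 - P n i)) * E S) ψ from rfl, h4,
          ← Nat.cast_smul_eq_nsmul ℝ S.card (E S)]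
        rfl
      have hBψ : ∑ i : Fin (2^n), (ψ - P n i ψ) = ∑ S, ((S.card : ℝ)) • v S := by
        have : ∑ i : Fin (2^n), (ψ - P n i ψ) = (∑ i : Fin (2^n), (1 - P n i)) ψ := by
          rw [ContinuousLinearMap.sum_apply]
          exact Finset.sum_congr rfl (fun i _ => by
            rw [ContinuousLinearMap.sub_apply, ContinuousLinearMap.one_apply])
        rw [this]
        conv_lhs => rw [← hsum, map_sum]
        exact Finset.sum_congr rfl (fun S _ => happ S)
      have hinner : ∀ S, ⟪v S, ψ⟫_ℂ = (‖v S‖:ℂ)^2 := by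
        intro S
        conv_lhs => rw [← hsum]
        rw [inner_sum, Finset.sum_eq_single S (fun T _ hT => horth S T (Ne.symm hT))
          (fun hS => absurd (Finset.mem_univ S) hS)]
        exact inner_self_eq_norm_sq_to_K _
      rw [hddef]
      simp only
      rw [hBψ]
      rw [show (((2:ℝ)^n)⁻¹ • ∑ S, ((S.card : ℝ)) • v S)
          = (((((2:ℝ)^n)⁻¹ : ℝ)) : ℂ) • ∑ S, ((S.card : ℝ)) • v S from
        (Complex.coe_smul _ _).symm, inner_smul_left]
      rw [sum_inner]
      have : ∀ S : Finset (Fin (2^n)),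
          ⟪((S.card : ℝ)) • v S, ψ⟫_ℂ = ((S.card : ℝ) : ℂ) * (‖v S‖:ℂ)^2 := by
        intro S
        rw [show ((S.card : ℝ)) • v S = (((S.card : ℝ)) : ℂ) • v S from
          (Complex.coe_smul _ _).symm, inner_smul_left, hinner]
        simp
      rw [Finset.sum_congr rfl (fun S _ => this S)]
      have h5 : ∀ S : Finset (Fin (2^n)),
          ((S.card:ℝ):ℂ) * (‖v S‖:ℂ)^2 = ((S.card * ‖v S‖^2 : ℝ) : ℂ) := fun S => by
        push_cast; ring
      rw [Finset.sum_congr rfl (fun S _ => h5 S), ← Complex.ofReal_sum, Complex.conj_ofReal,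
        ← Complex.ofReal_mul, Complex.ofReal_re, Finset.mul_sum, ht]
      exact Finset.sum_congr rfl (fun S _ => by ring)
    have hd0 : 0 ≤ d n := by
      rw [hdn]
      exact Finset.sum_nonneg (fun S _ => mul_nonneg (ht0 S) (sq_nonneg _))
    refine ⟨?_, ?_, hd0⟩
    · rw [hgsq, ← hnormpsi]
      refine Finset.sum_le_sum (fun S _ => ?_)
      have h1 : Real.exp (2 * γ.re * t S) ≤ 1 :=
        Real.exp_le_one_iff.2 (mul_nonpos_of_nonpos_of_nonneg (by linarith) (ht0 S))
      nlinarith [sq_nonneg (‖v S‖)]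
    · rw [hgsq, ← hnormpsi, hdn, Finset.mul_sum, ← Finset.sum_add_distrib]
      refine Finset.sum_le_sum (fun S _ => ?_)
      have h1 := Real.add_one_le_exp (2 * γ.re * t S)
      nlinarith [sq_nonneg (‖v S‖)]
  have hsq : Tendsto (fun n => g n ^ 2) atTop (𝓝 (‖ψ‖^2)) := by
    have hl : Tendsto (fun n => ‖ψ‖^2 + 2 * γ.re * d n) atTop (𝓝 (‖ψ‖^2)) := by
      have h1 := hdlim.const_mul (2 * γ.re)
      have h2 := (tendsto_const_nhds (x := ‖ψ‖^2) (f := atTop)).add h1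
      rw [mul_zero, add_zero] at h2
      exact h2
    exact tendsto_of_tendsto_of_tendsto_of_le_of_le hl tendsto_const_nhds
      (fun n => (main n).2.1) (fun n => (main n).1)
  have hs : Tendsto (fun n => Real.sqrt (g n ^ 2)) atTop (𝓝 (Real.sqrt (‖ψ‖^2))) :=
    (Real.continuous_sqrt.tendsto _).comp hsq
  have heq : (fun n => Real.sqrt (g n ^ 2)) = g :=
    funext (fun n => Real.sqrt_sq (norm_nonneg _))
  rw [heq, Real.sqrt_sq (norm_nonneg ψ)] at hs
  exact hs
end

section
/- Let f : [0,∞) → ℂ be Lebesgue measurable with f(s+t) = f(s)·f(t) for all s, t ≥ 0, |f(t)| ≤ 1 for all t ≥ 0, and f(t) ≠ 0 for all t ≥ 0. Then there exists γ ∈ ℂ with Re γ ≤ 0 such that f(t) = e^{γ t} for all t ≥ 0. -/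
open MeasureTheory Set Filter Metric intervalIntegral

/-- A Lebesgue measurable, contractive, nowhere vanishing multiplicative semigroup
`f : [0,∞) → ℂ` is of the form `f t = e^{γ t}` for some `γ` with `Re γ ≤ 0`. -/
theorem measurable_contractive_semigroup_eq_exp
    (f : ℝ → ℂ)
    (hmeas : ∀ s : Set ℂ, MeasurableSet s →
      MeasureTheory.NullMeasurableSet (f ⁻¹' s ∩ Set.Ici 0) MeasureTheory.volume)
    (hmul : ∀ s t : ℝ, 0 ≤ s → 0 ≤ t → f (s + t) = f s * f t)
    (hbdd : ∀ t : ℝ, 0 ≤ t → ‖f t‖ ≤ 1)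
    (hne : ∀ t : ℝ, 0 ≤ t → f t ≠ 0) :
    ∃ γ : ℂ, γ.re ≤ 0 ∧ ∀ t : ℝ, 0 ≤ t → f t = Complex.exp (γ * t) := by
  classical
  have hf0 : f 0 = 1 := by
    have h := hmul 0 0 le_rfl le_rfl
    rw [add_zero] at h
    exact (mul_left_cancel₀ (hne 0 le_rfl) (by rw [mul_one]; exact h)).symm
  -- the everywhere-defined version of f
  set fe : ℝ → ℂ := fun t => if 0 ≤ t then f t else 1 with hfe_def
  have hfe_eq : ∀ t : ℝ, 0 ≤ t → fe t = f t := fun t ht => if_pos ht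
  have hfe_bd : ∀ t : ℝ, ‖fe t‖ ≤ 1 := by
    intro t
    by_cases ht : 0 ≤ t
    · rw [hfe_eq t ht]; exact hbdd t ht
    · simp [hfe_def, ht]
  have haem : AEMeasurable fe volume := by
    apply MeasureTheory.NullMeasurable.aemeasurable
    intro s hs
    by_cases h1 : (1 : ℂ) ∈ s
    · have : fe ⁻¹' s = (f ⁻¹' s ∩ Ici 0) ∪ Iio 0 := by
        ext t
        by_cases ht : 0 ≤ t <;> simp [hfe_def, ht, h1, not_le.1, lt_of_not_ge]
      rw [this]
      exact (hmeas s hs).union measurableSet_Iio.nullMeasurableSet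
    · have : fe ⁻¹' s = f ⁻¹' s ∩ Ici 0 := by
        ext t
        by_cases ht : 0 ≤ t <;> simp [hfe_def, ht, h1]
      rw [this]
      exact hmeas s hs
  have hint : ∀ a b : ℝ, IntervalIntegrable fe volume a b := by
    intro a b
    rw [intervalIntegrable_iff]
    exact Measure.integrableOn_of_bounded measure_Ioc_lt_top.ne
      haem.aestronglyMeasurable (ae_of_all _ hfe_bd)
  -- Step: find h > 0 with nonzero integral of fe over [0, h]
  obtain ⟨h, hh, hI⟩ : ∃ h : ℝ, 0 < h ∧ (∫ s in (0:ℝ)..h, fe s) ≠ 0 := by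
    set F : ℝ → ℂ := fun x => ∫ s in (0:ℝ)..x, fe s with hF_def
    by_contra hcon
    push_neg at hcon
    have hF0 : ∀ x : ℝ, 0 ≤ x → F x = 0 := by
      intro x hx
      rcases hx.lt_or_eq with h | h
      · exact hcon x h
      · simp [hF_def, ← h]
    have hloc : LocallyIntegrable fe volume := by
      rw [locallyIntegrable_iff]
      intro K hK
      exact Measure.integrableOn_of_bounded hK.measure_lt_top.ne
        haem.aestronglyMeasurable (ae_of_all _ hfe_bd)
    have hae := IsUnifLocDoublingMeasure.ae_tendsto_average (μ := (volume : Measure ℝ)) hloc 1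
    have hae' : ∀ᵐ x ∂(volume.restrict (Ioi (0:ℝ))),
        (x ∈ Ioi (0:ℝ)) ∧ ∀ {ι : Type} {l : Filter ι} (w : ι → ℝ) (δ : ι → ℝ),
          Tendsto δ l (nhdsWithin 0 (Ioi 0)) →
          (∀ᶠ j in l, x ∈ closedBall (w j) (1 * δ j)) →
          Tendsto (fun j => ⨍ y in closedBall (w j) (δ j), fe y) l (nhds (fe x)) := by
      filter_upwards [ae_restrict_mem measurableSet_Ioi, ae_restrict_of_ae hae] with x h1 h2
      exact ⟨h1, fun w δ hδ hmem => h2 w δ hδ hmem⟩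
    have hne_bot : (ae (volume.restrict (Ioi (0:ℝ)))).NeBot := by
      rw [ae_neBot]
      simp [Real.volume_Ioi]
    obtain ⟨x, hx_pos, hx⟩ := hae'.exists
    have htend : Tendsto (fun r : ℝ => ⨍ y in closedBall x r, fe y)
        (nhdsWithin 0 (Ioi 0)) (nhds (fe x)) := by
      apply hx (fun _ => x) id tendsto_id
      filter_upwards [self_mem_nhdsWithin] with r hr
      exact mem_closedBall_self (by simp at hr ⊢; linarith)
    have hzero : ∀ᶠ r in nhdsWithin (0:ℝ) (Ioi 0),
        (⨍ y in closedBall x r, fe y) = 0 := by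
      filter_upwards [Ioo_mem_nhdsGT_of_mem (by constructor <;> [rfl; exact hx_pos] :
          (0:ℝ) ∈ Ico 0 x)] with r hr
      have h1 : (0:ℝ) ≤ x - r := by rcases hr with ⟨h1, h2⟩; linarith
      have h2 : x - r ≤ x + r := by rcases hr with ⟨h1, h2⟩; linarith
      have : (∫ y in closedBall x r, fe y) = F (x + r) - F (x - r) := by
        rw [Real.closedBall_eq_Icc, MeasureTheory.integral_Icc_eq_integral_Ioc,
          ← intervalIntegral.integral_of_le h2]
        rw [hF_def]
        exact (intervalIntegral.integral_interval_sub_left (hint 0 (x+r)) (hint 0 (x-r))).symm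
      rw [setAverage_eq, this, hF0 _ (by linarith : (0:ℝ) ≤ x + r), hF0 _ h1]
      simp
    have : fe x = 0 := tendsto_nhds_unique ((tendsto_congr' hzero).1 htend) tendsto_const_nhds
    rw [hfe_eq x (le_of_lt hx_pos)] at this
    exact hne x (le_of_lt hx_pos) this
  -- Step: continuous version g of f, via the primitive of fe
  set F : ℝ → ℂ := fun x => ∫ s in (0:ℝ)..x, fe s with hF_def
  set I : ℂ := F h with hI_def
  have hFcont : Continuous F := intervalIntegral.continuous_primitive hint 0
  have key : ∀ t : ℝ, 0 ≤ t → F (t + h) - F t = f t * I := by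
    intro t ht
    have e1 : F (t + h) - F t = ∫ x in t..t+h, fe x :=
      intervalIntegral.integral_interval_sub_left (hint 0 (t+h)) (hint 0 t)
    have e2 : (∫ x in (0:ℝ)..h, fe (t + x)) = ∫ x in t..t+h, fe x := by
      simpa using intervalIntegral.integral_comp_add_left (a := 0) (b := h) fe t
    have e3 : (∫ x in (0:ℝ)..h, fe (t + x)) = ∫ x in (0:ℝ)..h, f t * fe x := by
      apply intervalIntegral.integral_congr
      intro x hx
      rw [uIcc_of_le hh.le] at hx
      have hx0 : 0 ≤ x := hx.1
      simp only []
      rw [hfe_eq _ (by linarith), hfe_eq _ hx0, hmul t x ht hx0]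
    rw [e1, ← e2, e3, intervalIntegral.integral_const_mul]
  set g : ℝ → ℂ := fun t => (F (t + h) - F t) / I with hg_def
  have hgf : ∀ t : ℝ, 0 ≤ t → g t = f t := by
    intro t ht
    rw [hg_def]
    simp only []
    rw [key t ht, mul_div_assoc, div_self hI, mul_one]
  have hg_cont : Continuous g :=
    ((hFcont.comp (continuous_id.add continuous_const)).sub hFcont).div_const _
  -- Step: primitive of g, differentiability, ODE argument
  set G : ℝ → ℂ := fun x => ∫ s in (0:ℝ)..x, g s with hG_def
  have hG : ∀ b : ℝ, HasDerivAt G (g b) b := fun b =>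
    intervalIntegral.integral_hasDerivAt_right (hg_cont.intervalIntegrable _ _)
      (hg_cont.stronglyMeasurableAtFilter _ _) hg_cont.continuousAt
  have hGF : ∀ x : ℝ, 0 ≤ x → G x = F x := by
    intro x hx
    apply intervalIntegral.integral_congr
    intro y hy
    rw [uIcc_of_le hx] at hy
    rw [hgf y hy.1, hfe_eq y hy.1]
  set γ : ℂ := (f h - 1) / I with hγ_def
  set φ : ℝ → ℂ := fun t => (G (t + h) - G t) / I with hφ_def
  have hφf : ∀ t : ℝ, 0 ≤ t → φ t = f t := by
    intro t ht
    rw [hφ_def]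
    simp only []
    rw [hGF _ (by linarith), hGF _ ht, key t ht, mul_div_assoc, div_self hI, mul_one]
  have hφd : ∀ t : ℝ, HasDerivAt φ ((g (t + h) - g t) / I) t := by
    intro t
    have h1 : HasDerivAt (fun s : ℝ => G (s + h)) (g (t + h)) t := by
      have := (hG (t + h)).scomp t ((hasDerivAt_id t).add_const h)
      simpa [Function.comp_def] using this
    exact ((h1.sub (hG t)).div_const I)
  have hexp : ∀ t : ℝ, HasDerivAt (fun s : ℝ => Complex.exp (-(γ * s)))
      (-γ * Complex.exp (-(γ * t))) t := by
    intro t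
    have h1 : HasDerivAt (fun s : ℝ => (s : ℂ)) 1 t := Complex.ofRealCLM.hasDerivAt
    have h2 : HasDerivAt (fun s : ℝ => -(γ * (s : ℂ))) (-γ) t := by
      have := (h1.const_mul γ).neg; simp only [mul_one] at this; exact this
    simpa [mul_comm] using h2.cexp
  set u : ℝ → ℂ := fun t => φ t * Complex.exp (-(γ * t)) with hu_def
  have hud : ∀ t : ℝ, 0 ≤ t → HasDerivAt u 0 t := by
    intro t ht
    have hd := (hφd t).mul (hexp t)
    have hval : (g (t + h) - g t) / I = γ * φ t := by
      rw [hgf _ (by linarith), hgf _ ht, hφf _ ht, hmul t h ht hh.le, hγ_def]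
      field_simp
    rw [hval] at hd
    convert hd using 1
    exacts [rfl, rfl, by ring]
  have hu_cont : Continuous u := by
    have hGc : Continuous G := by
      rw [continuous_iff_continuousAt]; exact fun x => (hG x).continuousAt
    apply Continuous.mul
    · exact ((hGc.comp (continuous_id.add continuous_const)).sub hGc).div_const _
    · exact Complex.continuous_exp.comp ((continuous_const.mul Complex.continuous_ofReal).neg)
  have hu_const : ∀ t : ℝ, 0 ≤ t → u t = u 0 := by
    intro t ht
    exact constant_of_has_deriv_right_zero (hu_cont.continuousOn)
      (fun x hx => (hud x hx.1).hasDerivWithinAt) t (right_mem_Icc.2 ht)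
  have hu0 : u 0 = 1 := by
    rw [hu_def]
    simp only []
    rw [hφf 0 le_rfl, hf0]
    simp
  have hform : ∀ t : ℝ, 0 ≤ t → f t = Complex.exp (γ * t) := by
    intro t ht
    have := hu_const t ht
    rw [hu0, hu_def] at this
    simp only [] at this
    rw [hφf t ht] at this
    have h2 := congrArg (· * Complex.exp (γ * t)) this
    simp only [one_mul] at h2
    rwa [mul_assoc, ← Complex.exp_add, neg_add_cancel, Complex.exp_zero, mul_one] at h2
  refine ⟨γ, ?_, hform⟩
  have hb := hbdd 1 zero_le_one
  rw [hform 1 zero_le_one] at hb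
  have heq : ‖Complex.exp (γ * ((1:ℝ):ℂ))‖ = Real.exp ((γ * ((1:ℝ):ℂ)).re) := Complex.norm_exp _
  rw [heq] at hb
  simp only [Complex.ofReal_one, mul_one] at hb
  exact Real.exp_le_one_iff.1 hb
end
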